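/- arXiv:math/9201237 — 2 statements merged into one kernel-verified Lean document; each statement's English description precedes it below -/
import Mathlib

section
/- Let k ≥ 1 be an integer and let Φ be as in the context. For every n ≥ 0, sup{|Φ_{n,1}(x)| : x ∈ X_k, ‖x‖ ≤ 1} ≤ (k·2^n)^{-1/q} · sup{|Φ(x)| : x ∈ X_k, ‖x‖ ≤ 1}. -/
open MeasureTheory Set ENNReal

/-- The weak `L^p` "norm": `sup { (∫_B |f| dμ) / μ(B)^(1/q) }` over measurable `B`
with `0 < μ B < ∞`, computed in `ℝ≥0∞`. -/
noncomputable def wnorm {α : Type*} [MeasurableSpace α] (q : ℝ) (μ : Measure α)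
    (f : α → ℝ) : ℝ≥0∞ :=
  ⨆ (B : Set α) (_ : MeasurableSet B ∧ 0 < μ B ∧ μ B < ⊤),
    (∫⁻ x in B, ENNReal.ofReal |f x| ∂μ) / μ B ^ (1 / q)

lemma lint_count {N : ℕ} (B : Finset (Fin N)) (g : Fin N → ℝ≥0∞) :
    ∫⁻ x in (↑B : Set (Fin N)), g x ∂Measure.count = ∑ i ∈ B, g i := by
  classical
  have hBm : MeasurableSet (↑B : Set (Fin N)) := trivial
  rw [← lintegral_indicator hBm, lintegral_count, tsum_fintype]
  simp [Set.indicator_apply, Finset.sum_ite_mem]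

lemma count_fin_le {N : ℕ} (B : Set (Fin N)) : Measure.count B ≤ (N : ℝ≥0∞) := by
  calc Measure.count B ≤ Measure.count univ := measure_mono (subset_univ B)
  _ = N := by rw [Measure.count_univ]; simp

lemma wnorm_le {α : Type*} [MeasurableSpace α] {q : ℝ} {μ : Measure α} {f : α → ℝ}
    {C : ℝ≥0∞} (h : ∀ B : Set α, MeasurableSet B → 0 < μ B → μ B < ⊤ →
      (∫⁻ x in B, ENNReal.ofReal |f x| ∂μ) / μ B ^ (1 / q) ≤ C) :
    wnorm q μ f ≤ C :=
  iSup₂_le fun B hB => h B hB.1 hB.2.1 hB.2.2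

lemma le_wnorm {α : Type*} [MeasurableSpace α] {q : ℝ} {μ : Measure α} {f : α → ℝ}
    {B : Set α} (hB : MeasurableSet B) (h0 : 0 < μ B) (ht : μ B < ⊤) :
    (∫⁻ x in B, ENNReal.ofReal |f x| ∂μ) / μ B ^ (1 / q) ≤ wnorm q μ f :=
  le_iSup₂_of_le B ⟨hB, h0, ht⟩ le_rfl

lemma wnorm_mono {α : Type*} [MeasurableSpace α] {q : ℝ} {μ : Measure α} {f g : α → ℝ}
    (h : ∀ i, |f i| ≤ |g i|) : wnorm q μ f ≤ wnorm q μ g := by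
  refine iSup₂_mono fun B hB => ?_
  exact ENNReal.div_le_div_right
    (lintegral_mono fun x => ENNReal.ofReal_le_ofReal (h x)) _

lemma wnorm_sub_le {N : ℕ} {q : ℝ} (f g : Fin N → ℝ) :
    wnorm q Measure.count (f - g) ≤ wnorm q Measure.count f + wnorm q Measure.count g := by
  refine wnorm_le fun B hB h0 ht => ?_
  have h1 : (∫⁻ x in B, ENNReal.ofReal |(f - g) x| ∂Measure.count) ≤
      (∫⁻ x in B, ENNReal.ofReal |f x| ∂Measure.count)
        + (∫⁻ x in B, ENNReal.ofReal |g x| ∂Measure.count) := by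
    rw [← lintegral_add_left (by exact measurable_of_countable _)]
    refine lintegral_mono fun x => ?_
    rw [← ENNReal.ofReal_add (abs_nonneg _) (abs_nonneg _)]
    exact ENNReal.ofReal_le_ofReal (abs_sub _ _)
  calc _ ≤ ((∫⁻ x in B, ENNReal.ofReal |f x| ∂Measure.count)
        + (∫⁻ x in B, ENNReal.ofReal |g x| ∂Measure.count)) / Measure.count B ^ (1/q) :=
      ENNReal.div_le_div_right h1 _
    _ = _ + _ := ENNReal.add_div
    _ ≤ _ := add_le_add (le_wnorm hB h0 ht) (le_wnorm hB h0 ht)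

lemma wnorm_const_le {N : ℕ} {q : ℝ} (hq : 1 ≤ q) (c : ℝ) :
    wnorm q (Measure.count : Measure (Fin N)) (fun _ => c)
      ≤ ENNReal.ofReal |c| * (N : ℝ≥0∞) ^ (1 - 1/q) := by
  refine wnorm_le fun B hB h0 ht => ?_
  rw [setLIntegral_const]
  have hpow : Measure.count B / Measure.count B ^ (1/q) = Measure.count B ^ (1 - 1/q) := by
    rw [ENNReal.rpow_sub _ _ h0.ne' ht.ne, ENNReal.rpow_one]
  rw [mul_div_assoc, hpow]
  have hexp : 0 ≤ 1 - 1/q := by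
    have : 1/q ≤ 1 := by
      rw [div_le_one (by linarith)]; linarith
    linarith
  exact mul_le_mul_right (ENNReal.rpow_le_rpow (count_fin_le B) hexp) _

lemma sum_le_wnorm {N : ℕ} {q : ℝ} (f : Fin N → ℝ) (B : Finset (Fin N)) (hB : B.Nonempty) :
    ENNReal.ofReal |∑ i ∈ B, f i| ≤
      wnorm q (Measure.count : Measure (Fin N)) f * (B.card : ℝ≥0∞) ^ (1/q) := by
  have hBm : MeasurableSet (↑B : Set (Fin N)) := trivial
  have hcnt : Measure.count (↑B : Set (Fin N)) = (B.card : ℝ≥0∞) :=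
    Measure.count_apply_finset B
  have h0 : 0 < Measure.count (↑B : Set (Fin N)) := by
    rw [hcnt]; exact_mod_cast Nat.pos_of_ne_zero (by simpa [Finset.card_eq_zero] using hB.card_pos.ne')
  have ht : Measure.count (↑B : Set (Fin N)) < ⊤ := by rw [hcnt]; exact ENNReal.natCast_lt_top _
  have h1 : ENNReal.ofReal |∑ i ∈ B, f i| ≤ ∫⁻ x in (↑B : Set (Fin N)), ENNReal.ofReal |f x| ∂Measure.count := by
    rw [lint_count]
    calc ENNReal.ofReal |∑ i ∈ B, f i| ≤ ENNReal.ofReal (∑ i ∈ B, |f i|) :=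
        ENNReal.ofReal_le_ofReal (Finset.abs_sum_le_sum_abs _ _)
      _ = ∑ i ∈ B, ENNReal.ofReal |f i| := ENNReal.ofReal_sum_of_nonneg (fun i _ => abs_nonneg _)
  have h2 := le_wnorm (q := q) (f := f) hBm h0 ht
  have h3 : ENNReal.ofReal |∑ i ∈ B, f i| / Measure.count (↑B : Set (Fin N)) ^ (1/q) ≤
      wnorm q Measure.count f := le_trans (ENNReal.div_le_div_right h1 _) h2
  rw [ENNReal.div_le_iff_le_mul (Or.inl (by
      simp only [ne_eq, ENNReal.rpow_eq_zero_iff]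
      push_neg
      constructor
      · intro h; exact absurd h h0.ne'
      · intro h; exact absurd h ht.ne))
    (Or.inl (by
      simp only [ne_eq, ENNReal.rpow_eq_top_iff]
      push_neg
      constructor
      · intro h; exact absurd h h0.ne'
      · intro h; exact absurd h ht.ne))] at h3
  rwa [hcnt] at h3

lemma real_calc {a b r : ℝ} (ha : 0 < a) (hb : 0 < b) :
    (a ^ r / (a * b)) * (a * b) ^ (1 - r) = b ^ (-r) := by
  have hab : 0 < a * b := mul_pos ha hb
  have h1 : (a * b) ^ (1 - r) = (a * b) * (a * b) ^ (-r) := by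
    rw [show (1:ℝ) - r = 1 + (-r) by ring, Real.rpow_add hab, Real.rpow_one]
  rw [h1, Real.mul_rpow ha.le hb.le]
  have h2 : a ^ r * a ^ (-r) = 1 := by
    rw [← Real.rpow_add ha]; simp
  field_simp
  linear_combination h2

/-- The set `{f ≠ 0}` is σ-finite for `μ`. -/
def SigmaFinSupp {α : Type*} [MeasurableSpace α] (μ : Measure α) (f : α → ℝ) : Prop :=
  ∃ s : ℕ → Set α, {x | f x ≠ 0} ⊆ (⋃ n, s n) ∧ ∀ n, μ (s n) < ⊤

/-- Membership in the weak `L^p` space. -/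
def MemW {α : Type*} [MeasurableSpace α] (q : ℝ) (μ : Measure α) (f : α → ℝ) : Prop :=
  Measurable f ∧ SigmaFinSupp μ f ∧ wnorm q μ f < ⊤

/-- The ambient space of `X_k = (∑_{n≥0} ⊕ ℓ^{p,∞}(k·2^n))_{ℓ∞}`: all sequences
`x = (x_n)` with `x_n` a `k·2^n`-tuple of reals. -/
abbrev XFull (k : ℕ) := (n : ℕ) → Fin (k * 2 ^ n) → ℝ

/-- The norm of `X_k`: `sup_n ‖x_n‖`, where `‖·‖` is the weak `ℓ^p` norm
(counting measure on `Fin (k·2^n)`). -/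
noncomputable def Xnorm (q : ℝ) (k : ℕ) (x : XFull k) : ℝ≥0∞ :=
  ⨆ n, wnorm q (Measure.count : Measure (Fin (k * 2 ^ n))) (x n)

/-- Membership in `X_k`. -/
def MemX (q : ℝ) (k : ℕ) (x : XFull k) : Prop := Xnorm q k x < ⊤

lemma two_mul_succ_lt {k n j : ℕ} (h : j < k * 2 ^ n) : 2 * j + 1 < k * 2 ^ (n + 1) := by
  rw [pow_succ, ← mul_assoc]; omega

/-- `Z_k ⊆ X_k`: elements whose coordinate sums eventually vanish. -/
def Zset (q : ℝ) (k : ℕ) : Set (XFull k) :=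
  {x | MemX q k x ∧ ∃ i : ℕ, ∀ n ≥ i, ∑ j, x n j = 0}

/-- The element `u ∈ X_k`, `u_n(j) = (k·2^n)^{-1/p}`. -/
noncomputable def uElt (p : ℝ) (k : ℕ) : XFull k :=
  fun n _ => ((k : ℝ) * 2 ^ n) ^ (-(1 / p))

/-- Coordinatewise multiplication of `x ∈ X_k` by the indicator of a set of index pairs. -/
noncomputable def chiMul {k : ℕ} (A : (m : ℕ) → Set (Fin (k * 2 ^ m))) (x : XFull k) :
    XFull k :=
  fun m => (A m).indicator (x m)

/-- The index set `A_{n,j}` (the support of `T_k χ_{[(j-1)/2^n, j/2^n]}`): pairs `(m,i)`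
such that the dyadic interval of `(m,i)` meets that of `(n,j)` in positive Lebesgue
measure (all indices 0-indexed). -/
def Aset (k n : ℕ) (j : Fin (k * 2 ^ n)) : (m : ℕ) → Set (Fin (k * 2 ^ m)) :=
  fun m => {i | 0 < volume (Icc ((i : ℕ) / 2 ^ m : ℝ) (((i : ℕ) + 1) / 2 ^ m) ∩
    Icc ((j : ℕ) / 2 ^ n : ℝ) (((j : ℕ) + 1) / 2 ^ n))}

lemma mem_Aset0 {k n m : ℕ} (h : 0 < k * 2 ^ n) (i : Fin (k * 2 ^ m)) :
    i ∈ Aset k n ⟨0, h⟩ m ↔ (i : ℕ) * 2 ^ n < 2 ^ m := by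
  have h2m : (0:ℝ) < 2 ^ m := by positivity
  have h2n : (0:ℝ) < 2 ^ n := by positivity
  simp only [Aset, mem_setOf_eq, Icc_inter_Icc, Real.volume_Icc]
  rw [ENNReal.ofReal_pos]
  constructor
  · intro hlt
    have h1 : ((i:ℕ):ℝ) / 2 ^ m ⊔ (((⟨0,h⟩ : Fin (k*2^n)) : ℕ):ℝ) / 2 ^ n <
        (((i:ℕ):ℝ) + 1) / 2 ^ m ⊓ ((((⟨0,h⟩ : Fin (k*2^n)) : ℕ):ℝ) + 1) / 2 ^ n := by
      linarith [sub_pos.mp hlt]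
    simp only [Fin.val_mk, Nat.cast_zero, zero_div, zero_add] at h1
    have h2 : ((i:ℕ):ℝ) / 2 ^ m < 1 / 2 ^ n :=
      lt_of_le_of_lt (le_sup_left) (h1.trans_le inf_le_right)
    rw [div_lt_div_iff₀ h2m h2n, one_mul] at h2
    exact_mod_cast h2
  · intro hlt
    have h2 : ((i:ℕ):ℝ) * 2 ^ n < 2 ^ m := by exact_mod_cast hlt
    rw [sub_pos]
    simp only [Fin.val_mk, Nat.cast_zero, zero_div, zero_add]
    rw [sup_eq_left.mpr (by positivity), lt_inf_iff]
    constructor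
    · rw [div_lt_div_iff₀ h2m h2m]; nlinarith
    · rw [div_lt_div_iff₀ h2m h2n, one_mul]; exact h2

lemma card_Aset0 {k n m : ℕ} (h : 0 < k * 2 ^ n) (hnm : n ≤ m) [DecidablePred (· ∈ Aset k n ⟨0, h⟩ m)] :
    (Finset.univ.filter (· ∈ Aset k n ⟨0, h⟩ m)).card ≤ 2 ^ (m - n) := by
  classical
  calc (Finset.univ.filter (· ∈ Aset k n ⟨0, h⟩ m)).card
      ≤ (Finset.range (2 ^ (m - n))).card := by
        refine Finset.card_le_card_of_injOn (fun i => (i : ℕ)) ?_ ?_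
        · intro i hi
          have hi := (mem_Aset0 h i).mp (Finset.mem_filter.mp hi).2
          simp only [Finset.coe_range, Set.mem_Iio]
          have : 2 ^ m = 2 ^ (m - n) * 2 ^ n := by rw [← pow_add]; congr 1; omega
          exact lt_of_mul_lt_mul_right (hi.trans_eq this) (Nat.zero_le _)
        · intro a _ b _ hab; exact Fin.val_injective hab
    _ = 2 ^ (m - n) := Finset.card_range _

lemma Aset0_nonempty {k n m : ℕ} (h : 0 < k * 2 ^ n) (hk : 1 ≤ k) :
    (⟨0, by positivity⟩ : Fin (k * 2 ^ m)) ∈ Aset k n ⟨0, h⟩ m := by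
  rw [mem_Aset0]; simpa using Nat.pos_pow_of_pos m (by norm_num)

/-- Lemma 6 of the paper: `‖Φ_{n,1}‖ ≤ (k·2^n)^{-1/q} ‖Φ‖` (0-indexed: `j = 0`). -/
theorem Phi_n1_norm_bound (p q : ℝ) (hp : 1 < p) (hq : q = p / (p - 1))
    (k : ℕ) (hk : 1 ≤ k)
    (Φ : XFull k → ℝ)
    (hΦadd : ∀ x y : XFull k, MemX q k x → MemX q k y → Φ (x + y) = Φ x + Φ y)
    (hΦsmul : ∀ (c : ℝ) (x : XFull k), MemX q k x → Φ (c • x) = c * Φ x)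
    (hΦbd : ∀ x : XFull k, MemX q k x → ENNReal.ofReal |Φ x| ≤ Xnorm q k x)
    (hΦu : Φ (uElt p k) = 1)
    (hΦZ : ∀ z ∈ Zset q k, Φ z = 0)
    (n : ℕ) :
    sSup {r : ℝ | ∃ x : XFull k, MemX q k x ∧ Xnorm q k x ≤ 1 ∧
        r = |Φ (chiMul (Aset k n ⟨0, by positivity⟩) x)|} ≤
    ((k : ℝ) * 2 ^ n) ^ (-(1 / q)) *
      sSup {r : ℝ | ∃ x : XFull k, MemX q k x ∧ Xnorm q k x ≤ 1 ∧ r = |Φ x|} := by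
  classical
  -- basic facts about p and q
  have hp0 : (0:ℝ) < p - 1 := by linarith
  have hq1 : 1 < q := by rw [hq, lt_div_iff₀ hp0]; linarith
  have hq0 : (0:ℝ) < q := by linarith
  have hqp : 1 - 1/q = 1/p := by rw [hq]; field_simp; ring
  have hb : (0:ℝ) < (k : ℝ) * 2 ^ n := by positivity
  set b : ℝ := (k : ℝ) * 2 ^ n with hbdef
  have hbq : (0:ℝ) ≤ b ^ (-(1/q)) := (Real.rpow_pos_of_pos hb _).le
  -- the constant function bound instantiated
  have key_const : ∀ (m : ℕ) (c : ℝ), wnorm q (Measure.count : Measure (Fin (k * 2 ^ m)))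
      (fun _ => c) ≤ ENNReal.ofReal (|c| * ((k:ℝ) * 2 ^ m) ^ (1 - 1/q)) := by
    intro m c
    have hNm : (0:ℝ) < (k:ℝ) * 2 ^ m := by positivity
    refine (wnorm_const_le hq1.le c).trans_eq ?_
    rw [show ((k * 2 ^ m : ℕ) : ℝ≥0∞) = ENNReal.ofReal ((k:ℝ) * 2 ^ m) by
        rw [← ENNReal.ofReal_natCast]; congr 1; push_cast; ring,
      ENNReal.ofReal_rpow_of_pos hNm, ← ENNReal.ofReal_mul (abs_nonneg _)]
  -- RHS sup is at least 1
  have hXu : Xnorm q k (uElt p k) ≤ 1 := by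
    refine iSup_le fun m => ?_
    have hNm : (0:ℝ) < (k:ℝ) * 2 ^ m := by positivity
    have heq : uElt p k m = fun _ => ((k:ℝ) * 2 ^ m) ^ (-(1/p)) := rfl
    rw [heq]
    refine (key_const m _).trans ?_
    rw [show |((k:ℝ) * 2 ^ m) ^ (-(1/p))| = ((k:ℝ) * 2 ^ m) ^ (-(1/p)) from
      abs_of_pos (Real.rpow_pos_of_pos hNm _), hqp, ← Real.rpow_add hNm]
    simp
  have hmemu : MemX q k (uElt p k) := lt_of_le_of_lt hXu (by norm_num)
  have hRbdd : ∀ r ∈ {r : ℝ | ∃ x : XFull k, MemX q k x ∧ Xnorm q k x ≤ 1 ∧ r = |Φ x|},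
      r ≤ 1 := by
    rintro r ⟨x, hx, hxn, rfl⟩
    have := (hΦbd x hx).trans hxn
    rwa [show (1:ℝ≥0∞) = ENNReal.ofReal 1 by simp,
      ENNReal.ofReal_le_ofReal_iff (by norm_num)] at this
  have hR1 : 1 ≤ sSup {r : ℝ | ∃ x : XFull k, MemX q k x ∧ Xnorm q k x ≤ 1 ∧ r = |Φ x|} := by
    have hmem : (1:ℝ) ∈ {r : ℝ | ∃ x : XFull k, MemX q k x ∧ Xnorm q k x ≤ 1 ∧ r = |Φ x|} :=
      ⟨uElt p k, hmemu, hXu, by rw [hΦu]; norm_num⟩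
    exact le_csSup ⟨1, hRbdd⟩ hmem
  -- LHS bound
  have hL : ∀ r ∈ {r : ℝ | ∃ x : XFull k, MemX q k x ∧ Xnorm q k x ≤ 1 ∧
      r = |Φ (chiMul (Aset k n ⟨0, by positivity⟩) x)|}, r ≤ b ^ (-(1/q)) := by
    rintro r ⟨x, hx, hxn, rfl⟩
    set A := Aset k n ⟨0, by positivity⟩ with hA
    set y := chiMul A x with hy
    -- the level sums of y
    set σ : ℕ → ℝ := fun m => ∑ j, y m j with hσ
    have hσfilter : ∀ m, σ m = ∑ j ∈ Finset.univ.filter (· ∈ A m), x m j := by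
      intro m
      simp only [hσ, hy, chiMul]
      simpa using Finset.sum_indicator_eq_sum_filter Finset.univ (fun _ => x m) (fun _ => A m) id
    -- bound on the level sums, for m ≥ n
    have hσbd : ∀ m, n ≤ m → |σ m| ≤ ((2:ℝ) ^ (m - n)) ^ (1/q) := by
      intro m hnm
      have h2mn : (0:ℝ) < (2:ℝ) ^ (m - n) := by positivity
      have hSne : (Finset.univ.filter (· ∈ A m)).Nonempty :=
        ⟨⟨0, by positivity⟩, Finset.mem_filter.mpr ⟨Finset.mem_univ _, Aset0_nonempty _ hk⟩⟩
      have h1 := sum_le_wnorm (q := q) (x m) (Finset.univ.filter (· ∈ A m)) hSne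
      have hwx : wnorm q (Measure.count : Measure (Fin (k * 2 ^ m))) (x m) ≤ 1 :=
        (le_iSup (fun m => wnorm q (Measure.count : Measure (Fin (k * 2 ^ m))) (x m)) m).trans hxn
      have hcard : (((Finset.univ.filter (· ∈ A m)).card : ℝ≥0∞)) ^ (1/q) ≤
          ENNReal.ofReal (((2:ℝ) ^ (m - n)) ^ (1/q)) := by
        have hc := card_Aset0 (k := k) (by positivity) hnm
        calc (((Finset.univ.filter (· ∈ A m)).card : ℝ≥0∞)) ^ (1/q)
            ≤ (((2 ^ (m - n) : ℕ) : ℝ≥0∞)) ^ (1/q) :=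
              ENNReal.rpow_le_rpow (by exact_mod_cast hc) (by positivity)
          _ = ENNReal.ofReal (((2:ℝ) ^ (m - n)) ^ (1/q)) := by
              rw [← ENNReal.ofReal_natCast, ENNReal.ofReal_rpow_of_pos (by positivity)]
              congr 2
              push_cast; ring
      have h2 : ENNReal.ofReal |σ m| ≤ ENNReal.ofReal (((2:ℝ) ^ (m - n)) ^ (1/q)) := by
        rw [hσfilter m]
        refine h1.trans ?_
        calc wnorm q Measure.count (x m) * (((Finset.univ.filter (· ∈ A m)).card : ℝ≥0∞)) ^ (1/q)
            ≤ 1 * ENNReal.ofReal (((2:ℝ) ^ (m - n)) ^ (1/q)) := mul_le_mul' hwx hcard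
          _ = _ := one_mul _
      rwa [ENNReal.ofReal_le_ofReal_iff (by positivity)] at h2
    -- the correction element w
    set w : XFull k := fun m _ => if n ≤ m then σ m / ((k:ℝ) * 2 ^ m) else 0 with hw
    -- norm bound for w
    have hwnorm : ∀ m, wnorm q (Measure.count : Measure (Fin (k * 2 ^ m))) (w m) ≤
        ENNReal.ofReal (b ^ (-(1/q))) := by
      intro m
      by_cases hnm : n ≤ m
      · have hNm : (0:ℝ) < (k:ℝ) * 2 ^ m := by positivity
        have h2mn : (0:ℝ) < (2:ℝ) ^ (m - n) := by positivity
        have heq : w m = fun _ => σ m / ((k:ℝ) * 2 ^ m) := by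
          funext j; simp [hw, hnm]
        rw [heq]
        refine (key_const m _).trans (ENNReal.ofReal_le_ofReal ?_)
        have hfact : (k:ℝ) * 2 ^ m = (2:ℝ) ^ (m - n) * b := by
          rw [hbdef, show (2:ℝ) ^ (m - n) * ((k:ℝ) * 2 ^ n) = (k:ℝ) * ((2:ℝ) ^ (m - n) * 2 ^ n) by ring,
            ← pow_add]
          congr 2
          omega
        have habs : |σ m / ((k:ℝ) * 2 ^ m)| ≤ ((2:ℝ) ^ (m - n)) ^ (1/q) / ((k:ℝ) * 2 ^ m) := by
          rw [abs_div, abs_of_pos hNm]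
          exact (div_le_div_iff_of_pos_right hNm).mpr (hσbd m hnm)
        calc |σ m / ((k:ℝ) * 2 ^ m)| * ((k:ℝ) * 2 ^ m) ^ (1 - 1/q)
            ≤ (((2:ℝ) ^ (m - n)) ^ (1/q) / ((k:ℝ) * 2 ^ m)) * ((k:ℝ) * 2 ^ m) ^ (1 - 1/q) := by
              refine mul_le_mul_of_nonneg_right habs (Real.rpow_nonneg hNm.le _)
          _ = b ^ (-(1/q)) := by
              rw [hfact]; exact real_calc h2mn hb
      · have heq : w m = fun _ => (0:ℝ) := by funext j; simp [hw, hnm]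
        rw [heq]
        refine (key_const m _).trans ?_
        simp
    have hwX : Xnorm q k w ≤ ENNReal.ofReal (b ^ (-(1/q))) := iSup_le hwnorm
    have hmemw : MemX q k w := lt_of_le_of_lt hwX ENNReal.ofReal_lt_top
    -- y has norm at most that of x
    have hyX : Xnorm q k y ≤ 1 := by
      refine le_trans (iSup_mono fun m => wnorm_mono fun i => ?_) hxn
      by_cases hi : i ∈ A m
      · simp [hy, chiMul, Set.indicator_of_mem hi]
      · simp [hy, chiMul, Set.indicator_of_notMem hi, abs_nonneg]
    have hmemy : MemX q k y := lt_of_le_of_lt hyX (by norm_num)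
    -- y - w is in Z
    have hmemyw : MemX q k (y - w) := by
      have h1 : Xnorm q k (y - w) ≤ Xnorm q k y + Xnorm q k w := by
        refine iSup_le fun m => ?_
        have : (y - w) m = y m - w m := rfl
        rw [this]
        refine (wnorm_sub_le (y m) (w m)).trans (add_le_add
          (le_iSup (fun m => wnorm q (Measure.count : Measure (Fin (k * 2 ^ m))) (y m)) m)
          (le_iSup (fun m => wnorm q (Measure.count : Measure (Fin (k * 2 ^ m))) (w m)) m))
      exact lt_of_le_of_lt h1 (ENNReal.add_lt_top.mpr ⟨hmemy, hmemw⟩)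
    have hZ : (y - w) ∈ Zset q k := by
      refine ⟨hmemyw, n, fun m hm => ?_⟩
      have hNm : ((k:ℝ) * 2 ^ m) ≠ 0 := by positivity
      have hsw : ∑ j, w m j = σ m := by
        simp only [hw, if_pos hm]
        rw [Finset.sum_const, Finset.card_univ, Fintype.card_fin, nsmul_eq_mul]
        push_cast
        field_simp
      calc ∑ j, (y - w) m j = ∑ j, (y m j - w m j) := rfl
        _ = σ m - ∑ j, w m j := by rw [Finset.sum_sub_distrib, hσ]
        _ = 0 := by rw [hsw]; ring
    -- conclude
    have hyeq : y = w + (y - w) := by funext m j; simp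
    have hΦy : Φ y = Φ w := by
      rw [hyeq, hΦadd w (y - w) hmemw hmemyw, hΦZ _ hZ, add_zero]
    rw [hΦy]
    have := (hΦbd w hmemw).trans hwX
    rwa [ENNReal.ofReal_le_ofReal_iff hbq] at this
  refine Real.sSup_le hL hbq |>.trans ?_
  calc b ^ (-(1/q)) = b ^ (-(1/q)) * 1 := by ring
    _ ≤ _ := mul_le_mul_of_nonneg_left hR1 hbq
end

section
/- X_1 embeds complementably into ℓ^{p,∞}: there exist bounded linear maps S : X_1 → ℓ^{p,∞} and P : ℓ^{p,∞} → X_1 such that P ∘ S is the identity on X_1. -/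
open MeasureTheory Set ENNReal

lemma wnorm_add_le {α : Type*} [MeasurableSpace α] (q : ℝ) (μ : Measure α) {f g : α → ℝ}
    (hf : Measurable f) : wnorm q μ (f + g) ≤ wnorm q μ f + wnorm q μ g := by
  refine iSup₂_le fun B hB => ?_
  have h1 : (∫⁻ x in B, ENNReal.ofReal |(f + g) x| ∂μ)
      ≤ (∫⁻ x in B, ENNReal.ofReal |f x| ∂μ) + (∫⁻ x in B, ENNReal.ofReal |g x| ∂μ) := by
    rw [← lintegral_add_left (hf.abs.ennreal_ofReal)]
    refine lintegral_mono fun x => ?_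
    rw [← ENNReal.ofReal_add (abs_nonneg _) (abs_nonneg _)]
    exact ENNReal.ofReal_le_ofReal (abs_add_le _ _)
  calc (∫⁻ x in B, ENNReal.ofReal |(f + g) x| ∂μ) / μ B ^ (1 / q)
      ≤ ((∫⁻ x in B, ENNReal.ofReal |f x| ∂μ) + (∫⁻ x in B, ENNReal.ofReal |g x| ∂μ))
          / μ B ^ (1 / q) := by gcongr
    _ = (∫⁻ x in B, ENNReal.ofReal |f x| ∂μ) / μ B ^ (1 / q)
          + (∫⁻ x in B, ENNReal.ofReal |g x| ∂μ) / μ B ^ (1 / q) := ENNReal.add_div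
    _ ≤ wnorm q μ f + wnorm q μ g := by
        gcongr
        · exact le_iSup₂ (f := fun B _ =>
            (∫⁻ x in B, ENNReal.ofReal |f x| ∂μ) / μ B ^ (1 / q)) B hB
        · exact le_iSup₂ (f := fun B _ =>
            (∫⁻ x in B, ENNReal.ofReal |g x| ∂μ) / μ B ^ (1 / q)) B hB

lemma wnorm_smul_le {α : Type*} [MeasurableSpace α] (q : ℝ) (μ : Measure α) (c : ℝ)
    (f : α → ℝ) : wnorm q μ (c • f) ≤ ENNReal.ofReal |c| * wnorm q μ f := by
  refine iSup₂_le fun B hB => ?_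
  have h1 : (∫⁻ x in B, ENNReal.ofReal |(c • f) x| ∂μ)
      = ENNReal.ofReal |c| * ∫⁻ x in B, ENNReal.ofReal |f x| ∂μ := by
    rw [← lintegral_const_mul' _ _ ENNReal.ofReal_ne_top]
    congr 1; funext x
    rw [← ENNReal.ofReal_mul (abs_nonneg c)]
    simp [abs_mul]
  rw [h1, div_eq_mul_inv, mul_assoc, ← div_eq_mul_inv]
  exact mul_le_mul' le_rfl (le_iSup₂ (f := fun B _ =>
    (∫⁻ x in B, ENNReal.ofReal |f x| ∂μ) / μ B ^ (1 / q)) B hB)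

lemma wnorm_zero {α : Type*} [MeasurableSpace α] (q : ℝ) (μ : Measure α) :
    wnorm q μ (0 : α → ℝ) = 0 := by
  refine le_antisymm (iSup₂_le fun B hB => ?_) (zero_le')
  simp

lemma MemW.add {α : Type*} [MeasurableSpace α] {q : ℝ} {μ : Measure α} {f g : α → ℝ}
    (hf : MemW q μ f) (hg : MemW q μ g) : MemW q μ (f + g) := by
  obtain ⟨hfm, ⟨s, hs, hsfin⟩, hfn⟩ := hf
  obtain ⟨hgm, ⟨t, ht, htfin⟩, hgn⟩ := hg
  refine ⟨hfm.add hgm, ⟨fun n => s n ∪ t n, ?_, fun n => ?_⟩, ?_⟩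
  · intro x hx
    have : f x ≠ 0 ∨ g x ≠ 0 := by
      by_contra h
      push_neg at h
      exact hx (by simp [h.1, h.2])
    rcases this with h | h
    · obtain ⟨S, ⟨n, rfl⟩, hxS⟩ := hs h
      exact mem_iUnion.2 ⟨n, Or.inl hxS⟩
    · obtain ⟨S, ⟨n, rfl⟩, hxS⟩ := ht h
      exact mem_iUnion.2 ⟨n, Or.inr hxS⟩
  · exact lt_of_le_of_lt (measure_union_le _ _) (ENNReal.add_lt_top.2 ⟨hsfin n, htfin n⟩)
  · exact lt_of_le_of_lt (wnorm_add_le q μ hfm) (ENNReal.add_lt_top.2 ⟨hfn, hgn⟩)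

lemma MemW.smul {α : Type*} [MeasurableSpace α] {q : ℝ} {μ : Measure α} (c : ℝ) {f : α → ℝ}
    (hf : MemW q μ f) : MemW q μ (c • f) := by
  obtain ⟨hfm, ⟨s, hs, hsfin⟩, hfn⟩ := hf
  refine ⟨hfm.const_smul c, ⟨s, fun x hx => hs ?_, hsfin⟩, ?_⟩
  · intro h; apply hx; simp [h]
  · refine lt_of_le_of_lt (wnorm_smul_le q μ c f) ?_
    exact ENNReal.mul_lt_top ENNReal.ofReal_lt_top hfn

lemma MemW.zero {α : Type*} [MeasurableSpace α] (q : ℝ) (μ : Measure α) :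
    MemW q μ (0 : α → ℝ) :=
  ⟨measurable_const, ⟨fun _ => ∅, by simp, by simp⟩, by rw [wnorm_zero]; exact ENNReal.zero_lt_top⟩

/-- The weak `L^p` space as a submodule of the space of all real functions. -/
noncomputable def WLp {α : Type*} [MeasurableSpace α] (q : ℝ) (μ : Measure α) :
    Submodule ℝ (α → ℝ) where
  carrier := {f | MemW q μ f}
  add_mem' hf hg := hf.add hg
  zero_mem' := MemW.zero q μ
  smul_mem' c f hf := hf.smul c


lemma Xnorm_add_le (q : ℝ) (k : ℕ) (x y : XFull k) :
    Xnorm q k (x + y) ≤ Xnorm q k x + Xnorm q k y := by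
  refine iSup_le fun n => ?_
  calc wnorm q Measure.count ((x + y) n)
      = wnorm q Measure.count (x n + y n) := rfl
    _ ≤ wnorm q Measure.count (x n) + wnorm q Measure.count (y n) :=
        wnorm_add_le q _ (measurable_of_finite _)
    _ ≤ Xnorm q k x + Xnorm q k y :=
        add_le_add (le_iSup (fun n => wnorm q Measure.count (x n)) n)
          (le_iSup (fun n => wnorm q Measure.count (y n)) n)

lemma Xnorm_smul_le (q : ℝ) (k : ℕ) (c : ℝ) (x : XFull k) :
    Xnorm q k (c • x) ≤ ENNReal.ofReal |c| * Xnorm q k x := by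
  refine iSup_le fun n => ?_
  calc wnorm q Measure.count ((c • x) n)
      = wnorm q Measure.count (c • x n) := rfl
    _ ≤ ENNReal.ofReal |c| * wnorm q Measure.count (x n) := wnorm_smul_le q _ c _
    _ ≤ ENNReal.ofReal |c| * Xnorm q k x :=
        mul_le_mul' le_rfl (le_iSup (fun n => wnorm q Measure.count (x n)) n)

lemma Xnorm_zero (q : ℝ) (k : ℕ) : Xnorm q k (0 : XFull k) = 0 := by
  refine le_antisymm (iSup_le fun n => ?_) (zero_le')
  exact le_of_eq (wnorm_zero q _)

/-- `X_k` as a submodule of the ambient product space. -/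
noncomputable def Xsub (q : ℝ) (k : ℕ) : Submodule ℝ (XFull k) where
  carrier := {x | MemX q k x}
  add_mem' hx hy :=
    lt_of_le_of_lt (Xnorm_add_le _ _ _ _) (ENNReal.add_lt_top.2 ⟨hx, hy⟩)
  zero_mem' := by
    show Xnorm _ _ (0 : XFull _) < ⊤
    rw [Xnorm_zero]; exact ENNReal.zero_lt_top
  smul_mem' c x hx :=
    lt_of_le_of_lt (Xnorm_smul_le _ _ c x)
      (ENNReal.mul_lt_top ENNReal.ofReal_lt_top hx)

section AuxBasic

lemma aux_rpow_ne_zero {x : ℝ≥0∞} (h0 : x ≠ 0) (ht : x ≠ ⊤) (y : ℝ) : x ^ y ≠ 0 := by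
  simp [ENNReal.rpow_eq_zero_iff, h0, ht]

lemma aux_rpow_ne_top {x : ℝ≥0∞} (h0 : x ≠ 0) (ht : x ≠ ⊤) (y : ℝ) : x ^ y ≠ ⊤ := by
  simp [ENNReal.rpow_eq_top_iff, h0, ht]

variable {α : Type*} [MeasurableSpace α] [MeasurableSingletonClass α]

lemma aux_lintegral_finset (f : α → ℝ≥0∞) (s : Finset α) :
    ∫⁻ x in ↑s, f x ∂(Measure.count : Measure α) = ∑ x ∈ s, f x := by
  rw [← lintegral_indicator s.measurableSet, lintegral_count,
    tsum_eq_sum (s := s) (fun b hb => Set.indicator_of_notMem (by simpa using hb) f)]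
  exact Finset.sum_congr rfl fun b hb => Set.indicator_of_mem (by simpa using hb) f

lemma aux_finset_le_wnorm (q : ℝ) (f : α → ℝ) (s : Finset α) :
    ∑ x ∈ s, ENNReal.ofReal |f x|
      ≤ wnorm q Measure.count f * ((s.card : ℝ≥0∞)) ^ (1 / q) := by
  rcases s.eq_empty_or_nonempty with rfl | hne
  · simp
  · have hcount : Measure.count (↑s : Set α) = s.card := Measure.count_apply_finset s
    have h0 : (0 : ℝ≥0∞) < s.card := by exact_mod_cast hne.card_pos
    have hle : (∫⁻ x in (↑s : Set α), ENNReal.ofReal |f x| ∂Measure.count)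
        / (Measure.count (↑s : Set α)) ^ (1 / q) ≤ wnorm q Measure.count f :=
      le_iSup₂ (f := fun B (_ : MeasurableSet B ∧ 0 < Measure.count B ∧ Measure.count B < ⊤) =>
        (∫⁻ x in B, ENNReal.ofReal |f x| ∂Measure.count) / Measure.count B ^ (1 / q))
        (↑s) ⟨s.measurableSet, by rw [hcount]; exact ⟨h0, ENNReal.natCast_lt_top _⟩⟩
    rw [aux_lintegral_finset, hcount] at hle
    rw [ENNReal.div_le_iff (aux_rpow_ne_zero h0.ne' (ENNReal.natCast_ne_top _) _)
      (aux_rpow_ne_top h0.ne' (ENNReal.natCast_ne_top _) _)] at hle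
    exact hle

lemma aux_wnorm_le (q : ℝ) (M : ℝ≥0∞) (f : α → ℝ)
    (h : ∀ s : Finset α, ∑ x ∈ s, ENNReal.ofReal |f x| ≤ M * ((s.card : ℝ≥0∞)) ^ (1 / q)) :
    wnorm q Measure.count f ≤ M := by
  refine iSup₂_le fun B hB => ?_
  obtain ⟨hBm, hB0, hBt⟩ := hB
  have hfin : B.Finite := Measure.count_apply_lt_top.mp hBt
  have hBeq : B = ↑hfin.toFinset := by simp
  rw [hBeq, aux_lintegral_finset, Measure.count_apply_finset]
  exact ENNReal.div_le_of_le_mul (h _)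

lemma aux_rpow_tangent {e : ℝ} (he : 0 < e) (he1 : e ≤ 1) {u t : ℝ≥0∞}
    (hu : u ≠ ⊤) (ht0 : t ≠ 0) (htt : t ≠ ⊤) :
    u ^ e ≤ t ^ e + t ^ (e - 1) * u := by
  rcases le_total u t with h | h
  · exact le_add_right (ENNReal.rpow_le_rpow h he.le)
  · rcases eq_or_ne u 0 with rfl | hu0
    · simp [ENNReal.zero_rpow_of_pos he]
    · have h1 : u ^ e = u ^ (e - 1) * u := by
        calc u ^ e = u ^ (e - 1 + 1) := by ring_nf
          _ = u ^ (e - 1) * u ^ (1 : ℝ) := ENNReal.rpow_add _ _ hu0 hu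
          _ = u ^ (e - 1) * u := by rw [ENNReal.rpow_one]
      have h2 : u ^ (e - 1) ≤ t ^ (e - 1) := by
        have : e - 1 = -(1 - e) := by ring
        rw [this, ENNReal.rpow_neg, ENNReal.rpow_neg, ENNReal.inv_le_inv]
        exact ENNReal.rpow_le_rpow h (by linarith)
      rw [h1]
      exact le_add_left (mul_le_mul_left h2 u)

end AuxBasic

section AuxCombinatorics

def kk (n : ℕ) : ℕ := 2 ^ (n ^ 2)
def blen (n : ℕ) : ℕ := kk n * (1 * 2 ^ n)
def bstart (n : ℕ) : ℕ := ∑ m ∈ Finset.range n, blen m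

lemma kk_pos (n : ℕ) : 0 < kk n := Nat.pow_pos (by norm_num)
lemma blen_pos (n : ℕ) : 0 < blen n := Nat.mul_pos (kk_pos n) (by positivity)

lemma bstart_succ (n : ℕ) : bstart (n + 1) = bstart n + blen n :=
  Finset.sum_range_succ _ _

lemma le_bstart (n : ℕ) : n ≤ bstart n := by
  calc n = ∑ m ∈ Finset.range n, 1 := by simp
    _ ≤ bstart n := Finset.sum_le_sum fun m _ => blen_pos m

lemma bstart_le_bstart {a b : ℕ} (h : a ≤ b) : bstart a ≤ bstart b :=
  Finset.sum_le_sum_of_subset (Finset.range_subset_range.2 h)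

def blk (i : ℕ) : ℕ := Nat.findGreatest (fun n => bstart n ≤ i) i

lemma bstart_blk_le (i : ℕ) : bstart (blk i) ≤ i :=
  Nat.findGreatest_spec (P := fun n => bstart n ≤ i) (Nat.zero_le i) (by simp [bstart])

lemma lt_bstart_blk_succ (i : ℕ) : i < bstart (blk i + 1) := by
  by_contra h
  push_neg at h
  have h1 : blk i + 1 ≤ i := le_trans (le_bstart (blk i + 1)) h
  have h2 := Nat.le_findGreatest (P := fun n => bstart n ≤ i) h1 h
  simp only [blk] at h2
  omega

lemma blk_eq {n i : ℕ} (h1 : bstart n ≤ i) (h2 : i < bstart (n + 1)) : blk i = n := by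
  have hub : blk i ≤ n := by
    by_contra h
    push_neg at h
    have h3 : bstart (n + 1) ≤ bstart (blk i) := bstart_le_bstart h
    have h4 := bstart_blk_le i
    omega
  have hlb : n ≤ blk i :=
    Nat.le_findGreatest (P := fun m => bstart m ≤ i) (le_trans (le_bstart n) h1) h1
  omega

def bpos (i : ℕ) : ℕ := i - bstart (blk i)

lemma bpos_lt (i : ℕ) : bpos i < blen (blk i) := by
  have h1 := lt_bstart_blk_succ i
  have h2 := bstart_blk_le i
  rw [bstart_succ] at h1
  simp only [bpos]
  omega

lemma bpos_add (i : ℕ) : bstart (blk i) + bpos i = i := by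
  have := bstart_blk_le i
  simp only [bpos]
  omega

def jdx (i : ℕ) : ℕ := bpos i / kk (blk i)
def rdx (i : ℕ) : ℕ := bpos i % kk (blk i)

lemma jdx_lt (i : ℕ) : jdx i < 1 * 2 ^ (blk i) := by
  rw [show jdx i = bpos i / kk (blk i) from rfl, Nat.div_lt_iff_lt_mul (kk_pos _)]
  calc bpos i < blen (blk i) := bpos_lt i
    _ = 1 * 2 ^ (blk i) * kk (blk i) := by rw [blen]; ring

lemma rdx_lt (i : ℕ) : rdx i < kk (blk i) := Nat.mod_lt _ (kk_pos _)

lemma eq_of_blk_jdx_rdx {i i' : ℕ} (hb : blk i = blk i') (hj : jdx i = jdx i')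
    (hr : rdx i = rdx i') : i = i' := by
  have hpos : bpos i = bpos i' := by
    have e1 : kk (blk i) * jdx i + rdx i = bpos i := Nat.div_add_mod (bpos i) (kk (blk i))
    have e2 : kk (blk i') * jdx i' + rdx i' = bpos i' := Nat.div_add_mod (bpos i') (kk (blk i'))
    rw [← e1, ← e2, hb, hj, hr]
  rw [← bpos_add i, ← bpos_add i', hb, hpos]

def loc (n j r : ℕ) : ℕ := bstart n + (kk n * j + r)

lemma loc_lt {n j r : ℕ} (hj : j < 1 * 2 ^ n) (hr : r < kk n) :
    kk n * j + r < blen n := by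
  calc kk n * j + r < kk n * j + kk n := by omega
    _ = kk n * (j + 1) := by ring
    _ ≤ kk n * (1 * 2 ^ n) := Nat.mul_le_mul_left _ (by omega)

lemma blk_loc {n j r : ℕ} (hj : j < 1 * 2 ^ n) (hr : r < kk n) : blk (loc n j r) = n :=
  blk_eq (Nat.le_add_right _ _) (by rw [bstart_succ]; exact Nat.add_lt_add_left (loc_lt hj hr) _)

lemma bpos_loc {n j r : ℕ} (hj : j < 1 * 2 ^ n) (hr : r < kk n) :
    bpos (loc n j r) = kk n * j + r := by
  rw [show bpos (loc n j r) = loc n j r - bstart (blk (loc n j r)) from rfl, blk_loc hj hr]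
  simp only [loc]
  omega

lemma jdx_loc {n j r : ℕ} (hj : j < 1 * 2 ^ n) (hr : r < kk n) : jdx (loc n j r) = j := by
  simp only [jdx, blk_loc hj hr, bpos_loc hj hr]
  rw [Nat.mul_add_div (kk_pos n), Nat.div_eq_of_lt hr]
  omega


lemma rdx_loc {n j r : ℕ} (hj : j < 1 * 2 ^ n) (hr : r < kk n) : rdx (loc n j r) = r := by
  simp only [rdx, blk_loc hj hr, bpos_loc hj hr]
  rw [Nat.mul_add_mod, Nat.mod_eq_of_lt hr]

end AuxCombinatorics
section AuxMaps

noncomputable def xfun (x : XFull 1) (n : ℕ) (j : ℕ) : ℝ :=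
  if h : j < 1 * 2 ^ n then x n ⟨j, h⟩ else 0

noncomputable def Sfun (p : ℝ) (x : XFull 1) (i : ℕ) : ℝ :=
  ((kk (blk i) : ℝ) ^ (-(1 / p))) * xfun x (blk i) (jdx i)

noncomputable def Pfun (p : ℝ) (f : ℕ → ℝ) : XFull 1 := fun n j =>
  ((kk n : ℝ) ^ (1 / p - 1)) * ∑ r ∈ Finset.range (kk n), f (loc n (j : ℕ) r)

lemma xfun_add (x y : XFull 1) (n j : ℕ) : xfun (x + y) n j = xfun x n j + xfun y n j := by
  unfold xfun; split <;> simp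

lemma xfun_smul (c : ℝ) (x : XFull 1) (n j : ℕ) : xfun (c • x) n j = c * xfun x n j := by
  unfold xfun; split <;> simp

lemma kk_cast_pos (n : ℕ) : (0 : ℝ) < (kk n : ℝ) := by exact_mod_cast kk_pos n

lemma kk_ennreal_ne_zero (n : ℕ) : ((kk n : ℝ≥0∞)) ≠ 0 := by
  exact_mod_cast (kk_pos n).ne'

lemma kk_ennreal_ne_top (n : ℕ) : ((kk n : ℝ≥0∞)) ≠ ⊤ := ENNReal.natCast_ne_top _

lemma aux_ofReal_kk_rpow (n : ℕ) (e : ℝ) :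
    ENNReal.ofReal ((kk n : ℝ) ^ e) = (kk n : ℝ≥0∞) ^ e := by
  rw [← ENNReal.ofReal_rpow_of_pos (kk_cast_pos n), ENNReal.ofReal_natCast]

lemma aux_sum_xfun_le (q : ℝ) (x : XFull 1) (n : ℕ) (s : Finset ℕ)
    (hs : ∀ j ∈ s, j < 1 * 2 ^ n) :
    ∑ j ∈ s, ENNReal.ofReal |xfun x n j|
      ≤ wnorm q Measure.count (x n) * ((s.card : ℝ≥0∞)) ^ (1 / q) := by
  have key : ∑ j ∈ s, ENNReal.ofReal |xfun x n j|
      = ∑ a ∈ s.attachFin hs, ENNReal.ofReal |x n a| := by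
    refine Finset.sum_bij' (fun (a : ℕ) (ha : a ∈ s) => (⟨a, hs a ha⟩ : Fin (1 * 2 ^ n)))
      (fun (a : Fin (1 * 2 ^ n)) (_ : a ∈ s.attachFin hs) => (a : ℕ)) ?_ ?_ ?_ ?_ ?_
    · intro a ha; rw [Finset.mem_attachFin]; exact ha
    · intro a ha; rw [Finset.mem_attachFin] at ha; exact ha
    · intro a ha; rfl
    · intro a ha; rfl
    · intro a ha; rw [show xfun x n a = x n ⟨a, hs a ha⟩ from dif_pos (hs a ha)]
  rw [key, ← Finset.card_attachFin s hs]
  exact aux_finset_le_wnorm q (x n) _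

lemma aux_xfun_le_Xnorm (q : ℝ) (x : XFull 1) (i : ℕ) :
    ENNReal.ofReal |xfun x (blk i) (jdx i)| ≤ Xnorm q 1 x := by
  have h := aux_sum_xfun_le q x (blk i) {jdx i} (by
    intro j hj; rw [Finset.mem_singleton] at hj; subst hj; exact jdx_lt i)
  simp only [Finset.sum_singleton, Finset.card_singleton, Nat.cast_one, ENNReal.one_rpow,
    mul_one] at h
  refine h.trans ?_
  unfold Xnorm
  exact le_iSup (fun n => wnorm q Measure.count (x n)) (blk i)

lemma wnorm_le_Xnorm (q : ℝ) (x : XFull 1) (n : ℕ) :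
    wnorm q Measure.count (x n) ≤ Xnorm q 1 x := by
  unfold Xnorm
  exact le_iSup (fun n => wnorm q Measure.count (x n)) n

end AuxMaps

section AuxBlocks

lemma aux_rpow_add {a : ℝ≥0∞} (ha0 : a ≠ 0) (hat : a ≠ ⊤) (s t : ℝ) :
    a ^ s * a ^ t = a ^ (s + t) := (ENNReal.rpow_add _ _ ha0 hat).symm

lemma aux_holder {e f : ℝ} (he : 0 < e) (he1 : e ≤ 1) (hef : e + f = 1) (k : ℕ) (hk : 0 < k)
    (u : ℕ → ℕ) :
    ∑ r ∈ Finset.range k, ((u r : ℝ≥0∞)) ^ e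
      ≤ 2 * (k : ℝ≥0∞) ^ f * (((∑ r ∈ Finset.range k, u r : ℕ) : ℝ≥0∞)) ^ e := by
  set b : ℕ := ∑ r ∈ Finset.range k, u r with hb
  rcases Nat.eq_zero_or_pos b with hb0 | hbpos
  · have hz : ∀ r ∈ Finset.range k, u r = 0 := Finset.sum_eq_zero_iff.mp (hb ▸ hb0)
    rw [Finset.sum_congr rfl (fun r hr => by rw [hz r hr])]
    simp [ENNReal.zero_rpow_of_pos he]
  · have hK0 : ((k : ℝ≥0∞)) ≠ 0 := by exact_mod_cast hk.ne'
    have hKt : ((k : ℝ≥0∞)) ≠ ⊤ := ENNReal.natCast_ne_top _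
    have hb'0 : ((b : ℝ≥0∞)) ≠ 0 := by exact_mod_cast hbpos.ne'
    have hb't : ((b : ℝ≥0∞)) ≠ ⊤ := ENNReal.natCast_ne_top _
    set t : ℝ≥0∞ := (b : ℝ≥0∞) * ((k : ℝ≥0∞))⁻¹ with ht
    have ht0 : t ≠ 0 := by
      simp [ht, hb'0, ENNReal.inv_ne_zero, hKt]
    have htt : t ≠ ⊤ := ENNReal.mul_ne_top hb't (by simp [hK0])
    have step1 : ∑ r ∈ Finset.range k, ((u r : ℝ≥0∞)) ^ e
        ≤ ∑ r ∈ Finset.range k, (t ^ e + t ^ (e - 1) * (u r : ℝ≥0∞)) :=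
      Finset.sum_le_sum fun r _ =>
        aux_rpow_tangent he he1 (ENNReal.natCast_ne_top _) ht0 htt
    have step2 : ∑ r ∈ Finset.range k, (t ^ e + t ^ (e - 1) * (u r : ℝ≥0∞))
        = (k : ℝ≥0∞) * t ^ e + t ^ (e - 1) * (b : ℝ≥0∞) := by
      rw [Finset.sum_add_distrib, Finset.sum_const, Finset.card_range, ← Finset.mul_sum]
      rw [nsmul_eq_mul, hb]
      push_cast
      ring
    have hteq : t ^ e = ((b : ℝ≥0∞)) ^ e * (((k : ℝ≥0∞)) ^ e)⁻¹ := by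
      rw [ht, ENNReal.mul_rpow_of_ne_zero hb'0 (by simp [hKt]), ENNReal.inv_rpow]
    have hte1 : t ^ (e - 1) = ((b : ℝ≥0∞)) ^ (e - 1) * (((k : ℝ≥0∞)) ^ (e - 1))⁻¹ := by
      rw [ht, ENNReal.mul_rpow_of_ne_zero hb'0 (by simp [hKt]), ENNReal.inv_rpow]
    have key1 : (k : ℝ≥0∞) * t ^ e = (k : ℝ≥0∞) ^ f * ((b : ℝ≥0∞)) ^ e := by
      rw [hteq, ← ENNReal.rpow_neg, ← mul_assoc]
      nth_rewrite 1 [← ENNReal.rpow_one ((k : ℝ≥0∞))]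
      rw [mul_comm (((k:ℝ≥0∞)) ^ (1:ℝ)) _, mul_assoc, aux_rpow_add hK0 hKt]
      rw [show (1 : ℝ) + -e = f by linarith, mul_comm]
    have key2 : t ^ (e - 1) * (b : ℝ≥0∞) = (k : ℝ≥0∞) ^ f * ((b : ℝ≥0∞)) ^ e := by
      rw [hte1, ← ENNReal.rpow_neg]
      calc ((b:ℝ≥0∞)) ^ (e-1) * ((k:ℝ≥0∞)) ^ (-(e-1)) * ((b:ℝ≥0∞))
          = (((b:ℝ≥0∞)) ^ (e-1) * ((b:ℝ≥0∞)) ^ (1:ℝ)) * ((k:ℝ≥0∞)) ^ (-(e-1)) := by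
            rw [ENNReal.rpow_one]; ring
        _ = ((b:ℝ≥0∞)) ^ e * ((k:ℝ≥0∞)) ^ f := by
            rw [aux_rpow_add hb'0 hb't, show e - 1 + 1 = e by ring, show -(e-1) = f by linarith]
        _ = ((k:ℝ≥0∞)) ^ f * ((b:ℝ≥0∞)) ^ e := mul_comm _ _
    calc ∑ r ∈ Finset.range k, ((u r : ℝ≥0∞)) ^ e
        ≤ (k : ℝ≥0∞) * t ^ e + t ^ (e - 1) * (b : ℝ≥0∞) := step1.trans (le_of_eq step2)
      _ = 2 * (k : ℝ≥0∞) ^ f * ((b : ℝ≥0∞)) ^ e := by rw [key1, key2]; ring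
      _ = 2 * (k : ℝ≥0∞) ^ f * (((∑ r ∈ Finset.range k, u r : ℕ) : ℝ≥0∞)) ^ e := by rw [hb]

end AuxBlocks
section AuxSBound

lemma blk_le (i : ℕ) : blk i ≤ i := Nat.findGreatest_le i

lemma aux_sub_inj {L a a' : ℕ} (ha : a ≤ L) (ha' : a' ≤ L) (h : L - a = L - a') : a = a' := by
  omega

lemma aux_sub_inj' {c a a' : ℕ} (ha : c ≤ a) (ha' : c ≤ a') (h : a - c = a' - c) : a = a' := by
  omega

lemma aux_sq_add_inj {n n' : ℕ} (h : n ^ 2 + n = n' ^ 2 + n') : n = n' := by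
  rcases lt_trichotomy n n' with hlt | he | hlt
  · exfalso
    have key : (n + 1) * (n + 1) ≤ n' * n' := Nat.mul_le_mul hlt hlt
    have e1 : n ^ 2 = n * n := sq n
    have e2 : n' ^ 2 = n' * n' := sq n'
    nlinarith
  · exact he
  · exfalso
    have key : (n' + 1) * (n' + 1) ≤ n * n := Nat.mul_le_mul hlt hlt
    have e1 : n ^ 2 = n * n := sq n
    have e2 : n' ^ 2 = n' * n' := sq n'
    nlinarith

lemma aux_sq_inj {n n' : ℕ} (h : n ^ 2 = n' ^ 2) : n = n' :=
  Nat.pow_left_injective (by norm_num) h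

lemma aux_unique_mid {L n n' : ℕ} (h1 : n ^ 2 ≤ L) (h2 : L < n ^ 2 + n)
    (h1' : n' ^ 2 ≤ L) (h2' : L < n' ^ 2 + n') : n = n' := by
  rcases lt_trichotomy n n' with hlt | he | hlt
  · exfalso
    have key : (n + 1) * (n + 1) ≤ n' * n' := Nat.mul_le_mul hlt hlt
    have e1 : n ^ 2 = n * n := sq n
    have e2 : n' ^ 2 = n' * n' := sq n'
    nlinarith
  · exact he
  · exfalso
    have key : (n' + 1) * (n' + 1) ≤ n * n := Nat.mul_le_mul hlt hlt
    have e1 : n ^ 2 = n * n := sq n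
    have e2 : n' ^ 2 = n' * n' := sq n'
    nlinarith

lemma aux_cast_two_pow (a : ℕ) : ((2 ^ a : ℕ) : ℝ≥0∞) = (2 : ℝ≥0∞) ^ ((a : ℝ)) := by
  rw [Nat.cast_pow, Nat.cast_ofNat, ← ENNReal.rpow_natCast]

lemma aux_two_ne_zero : (2 : ℝ≥0∞) ≠ 0 := by norm_num
lemma aux_two_ne_top : (2 : ℝ≥0∞) ≠ ⊤ := by norm_num

lemma aux_pow_div (c : ℝ) (a L : ℕ) (h : a ≤ L) :
    (2 : ℝ≥0∞) ^ ((a : ℝ) * c)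
      = ((2 : ℝ≥0∞) ^ (-c)) ^ ((L - a : ℕ)) * (2 : ℝ≥0∞) ^ ((L : ℝ) * c) := by
  rw [← ENNReal.rpow_natCast ((2 : ℝ≥0∞) ^ (-c)) (L - a), ← ENNReal.rpow_mul,
    aux_rpow_add aux_two_ne_zero aux_two_ne_top]
  congr 1
  rw [Nat.cast_sub h]
  ring

lemma blen_eq (n : ℕ) : blen n = 2 ^ (n ^ 2 + n) := by
  rw [blen, kk, one_mul, ← pow_add]

lemma aux_block_eq (p : ℝ) (x : XFull 1) (n : ℕ) (T : Finset ℕ)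
    (hT : ∀ i ∈ T, blk i = n) :
    ∑ i ∈ T, ENNReal.ofReal |Sfun p x i|
      = (kk n : ℝ≥0∞) ^ (-(1 / p)) * ∑ i ∈ T, ENNReal.ofReal |xfun x n (jdx i)| := by
  rw [Finset.mul_sum]
  refine Finset.sum_congr rfl fun i hi => ?_
  simp only [Sfun, hT i hi]
  rw [abs_mul, abs_of_nonneg (Real.rpow_nonneg (kk_cast_pos n).le _),
    ENNReal.ofReal_mul (Real.rpow_nonneg (kk_cast_pos n).le _), aux_ofReal_kk_rpow]

lemma aux_block_bound1 (q : ℝ) (x : XFull 1) (n : ℕ) (T : Finset ℕ)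
    (hT : ∀ i ∈ T, blk i = n) :
    ∑ i ∈ T, ENNReal.ofReal |xfun x n (jdx i)| ≤ (T.card : ℝ≥0∞) * Xnorm q 1 x := by
  calc ∑ i ∈ T, ENNReal.ofReal |xfun x n (jdx i)|
      ≤ T.card • Xnorm q 1 x := Finset.sum_le_card_nsmul _ _ _ (fun i hi => by
        rw [← hT i hi]; exact aux_xfun_le_Xnorm q x i)
    _ = (T.card : ℝ≥0∞) * Xnorm q 1 x := nsmul_eq_mul _ _

lemma aux_block_bound2 (p q : ℝ) (he : 0 < 1 / q) (he1 : 1 / q ≤ 1)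
    (hef : 1 / q + 1 / p = 1) (x : XFull 1) (n : ℕ) (T : Finset ℕ)
    (hT : ∀ i ∈ T, blk i = n) :
    ∑ i ∈ T, ENNReal.ofReal |xfun x n (jdx i)|
      ≤ 2 * (kk n : ℝ≥0∞) ^ (1 / p) * Xnorm q 1 x * ((T.card : ℝ≥0∞)) ^ (1 / q) := by
  classical
  have hmaps : ∀ i ∈ T, rdx i ∈ Finset.range (kk n) := fun i hi =>
    Finset.mem_range.2 (hT i hi ▸ rdx_lt i)
  rw [← Finset.sum_fiberwise_of_maps_to hmaps (fun i => ENNReal.ofReal |xfun x n (jdx i)|)]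
  have hfib : ∀ r : ℕ,
      ∑ i ∈ T.filter (fun i => rdx i = r), ENNReal.ofReal |xfun x n (jdx i)|
        ≤ Xnorm q 1 x * (((T.filter (fun i => rdx i = r)).card : ℝ≥0∞)) ^ (1 / q) := by
    intro r
    set U := T.filter (fun i => rdx i = r) with hU
    have hmemU : ∀ i ∈ U, blk i = n ∧ rdx i = r := by
      intro i hi; rw [hU, Finset.mem_filter] at hi; exact ⟨hT i hi.1, hi.2⟩
    have hinj : ∀ i ∈ U, ∀ i' ∈ U, jdx i = jdx i' → i = i' := by
      intro i hi i' hi' hj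
      exact eq_of_blk_jdx_rdx (by rw [(hmemU i hi).1, (hmemU i' hi').1]) hj
        (by rw [(hmemU i hi).2, (hmemU i' hi').2])
    rw [← Finset.sum_image (f := fun j => ENNReal.ofReal |xfun x n j|) hinj]
    have hlt : ∀ j ∈ U.image jdx, j < 1 * 2 ^ n := by
      intro j hj
      obtain ⟨i, hi, rfl⟩ := Finset.mem_image.mp hj
      exact (hmemU i hi).1 ▸ jdx_lt i
    refine (aux_sum_xfun_le q x n _ hlt).trans ?_
    rw [Finset.card_image_of_injOn (fun i hi i' hi' hj =>
      hinj i (by simpa using hi) i' (by simpa using hi') hj)]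
    exact mul_le_mul_left (wnorm_le_Xnorm q x n) _
  calc ∑ r ∈ Finset.range (kk n),
        ∑ i ∈ T.filter (fun i => rdx i = r), ENNReal.ofReal |xfun x n (jdx i)|
      ≤ ∑ r ∈ Finset.range (kk n),
          Xnorm q 1 x * (((T.filter (fun i => rdx i = r)).card : ℝ≥0∞)) ^ (1 / q) :=
        Finset.sum_le_sum fun r _ => hfib r
    _ = Xnorm q 1 x * ∑ r ∈ Finset.range (kk n),
          (((T.filter (fun i => rdx i = r)).card : ℝ≥0∞)) ^ (1 / q) := by
        rw [Finset.mul_sum]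
    _ ≤ Xnorm q 1 x * (2 * (kk n : ℝ≥0∞) ^ (1 / p) *
          (((∑ r ∈ Finset.range (kk n), (T.filter (fun i => rdx i = r)).card : ℕ) : ℝ≥0∞)) ^ (1 / q)) :=
        mul_le_mul_right (aux_holder he he1 hef (kk n) (kk_pos n) _) _
    _ = 2 * (kk n : ℝ≥0∞) ^ (1 / p) * Xnorm q 1 x * ((T.card : ℝ≥0∞)) ^ (1 / q) := by
        rw [← Finset.card_eq_sum_card_fiberwise hmaps]
        ring

noncomputable def Kc (p q : ℝ) : ℝ≥0∞ :=
  2 * (1 - (2 : ℝ≥0∞) ^ (-(1 / q)))⁻¹ + 2 + (1 - (2 : ℝ≥0∞) ^ (-(1 / p)))⁻¹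

lemma Kc_ne_top {p q : ℝ} (hp : 0 < 1 / p) (hq : 0 < 1 / q) : Kc p q ≠ ⊤ := by
  have h1 : (2 : ℝ≥0∞) ^ (-(1 / q)) < 1 :=
    ENNReal.rpow_lt_one_of_one_lt_of_neg (by norm_num) (by linarith)
  have h2 : (2 : ℝ≥0∞) ^ (-(1 / p)) < 1 :=
    ENNReal.rpow_lt_one_of_one_lt_of_neg (by norm_num) (by linarith)
  have i1 : (1 - (2 : ℝ≥0∞) ^ (-(1 / q)))⁻¹ ≠ ⊤ := by
    rw [Ne, ENNReal.inv_eq_top, tsub_eq_zero_iff_le]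
    exact not_le.mpr h1
  have i2 : (1 - (2 : ℝ≥0∞) ^ (-(1 / p)))⁻¹ ≠ ⊤ := by
    rw [Ne, ENNReal.inv_eq_top, tsub_eq_zero_iff_le]
    exact not_le.mpr h2
  exact ENNReal.add_ne_top.2 ⟨ENNReal.add_ne_top.2
    ⟨ENNReal.mul_ne_top aux_two_ne_top i1, aux_two_ne_top⟩, i2⟩

end AuxSBound
section AuxSMain

lemma aux_real_facts {p q : ℝ} (hp : 1 < p) (hq : q = p / (p - 1)) :
    0 < 1 / p ∧ 0 < 1 / q ∧ 1 / q ≤ 1 ∧ 1 / q + 1 / p = 1 := by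
  have hp0 : (0 : ℝ) < p := by linarith
  have h2 : p - 1 ≠ 0 := by intro h; rw [sub_eq_zero] at h; exact absurd h.symm hp.ne
  have h1 : p ≠ 0 := hp0.ne'
  have hinv : 1 / q = 1 - 1 / p := by
    rw [hq, one_div_div]
    field_simp
  have h1p : 1 / p < 1 := by rw [div_lt_one hp0]; exact hp
  have h1p0 : 0 < 1 / p := by positivity
  exact ⟨h1p0, by rw [hinv]; linarith, by rw [hinv]; linarith, by rw [hinv]; ring⟩

lemma aux_S_sum_le (p q : ℝ) (hp : 1 < p) (hq : q = p / (p - 1)) (x : XFull 1) (B : Finset ℕ) :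
    ∑ i ∈ B, ENNReal.ofReal |Sfun p x i|
      ≤ Kc p q * Xnorm q 1 x * ((B.card : ℝ≥0∞)) ^ (1 / q) := by
  classical
  obtain ⟨hp1, he, he1, hef⟩ := aux_real_facts hp hq
  rcases B.eq_empty_or_nonempty with rfl | hne
  · simp
  set A := Xnorm q 1 x with hA
  set m := B.card with hm
  have hm0 : m ≠ 0 := hne.card_pos.ne'
  have hmE0 : ((m : ℝ≥0∞)) ≠ 0 := by exact_mod_cast hm0
  have hmEt : ((m : ℝ≥0∞)) ≠ ⊤ := ENNReal.natCast_ne_top _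
  set L := Nat.log 2 m with hL
  have h2L : (2 : ℕ) ^ L ≤ m := Nat.pow_log_le_self 2 hm0
  have hm2L : m < 2 ^ (L + 1) := Nat.lt_pow_succ_log_self (by norm_num) m
  set N0 := B.sup id + 1 with hN0
  have hmapsN : ∀ i ∈ B, blk i ∈ Finset.range N0 := by
    intro i hi
    exact Finset.mem_range.2 (Nat.lt_succ_of_le ((blk_le i).trans (Finset.le_sup (f := id) hi)))
  set T : ℕ → Finset ℕ := fun n => B.filter (fun i => blk i = n) with hTdef
  set E : ℕ → ℝ≥0∞ := fun n => ∑ i ∈ T n, ENNReal.ofReal |Sfun p x i| with hEdef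
  have hfibeq : ∑ i ∈ B, ENNReal.ofReal |Sfun p x i| = ∑ n ∈ Finset.range N0, E n := by
    simp only [hEdef, hTdef]
    exact (Finset.sum_fiberwise_of_maps_to hmapsN _).symm
  rw [hfibeq]
  have hT : ∀ n, ∀ i ∈ T n, blk i = n := by
    intro n i hi; rw [hTdef] at hi; exact (Finset.mem_filter.mp hi).2
  have hcard_m : ∀ n, (T n).card ≤ m := fun n => Finset.card_filter_le _ _
  have hcard_blen : ∀ n, (T n).card ≤ blen n := by
    intro n
    have hsub : T n ⊆ Finset.Ico (bstart n) (bstart n + blen n) := by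
      intro i hi
      have hbi := hT n i hi
      rw [Finset.mem_Ico]
      refine ⟨?_, ?_⟩
      · rw [← hbi]; exact bstart_blk_le i
      · rw [← bstart_succ, ← hbi]; exact lt_bstart_blk_succ i
    calc (T n).card ≤ _ := Finset.card_le_card hsub
      _ = blen n := by rw [Nat.card_Ico]; omega
  have hE2 : ∀ n, E n ≤ 2 * A * (((T n).card : ℝ≥0∞)) ^ (1 / q) := by
    intro n
    rw [hEdef]
    simp only []
    rw [aux_block_eq p x n (T n) (hT n)]
    calc (kk n : ℝ≥0∞) ^ (-(1 / p)) * ∑ i ∈ T n, ENNReal.ofReal |xfun x n (jdx i)|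
        ≤ (kk n : ℝ≥0∞) ^ (-(1 / p)) *
            (2 * (kk n : ℝ≥0∞) ^ (1 / p) * A * (((T n).card : ℝ≥0∞)) ^ (1 / q)) :=
          mul_le_mul_right (aux_block_bound2 p q he he1 hef x n (T n) (hT n)) _
      _ = ((kk n : ℝ≥0∞) ^ (-(1 / p)) * (kk n : ℝ≥0∞) ^ (1 / p)) *
            (2 * A * (((T n).card : ℝ≥0∞)) ^ (1 / q)) := by ring
      _ = 2 * A * (((T n).card : ℝ≥0∞)) ^ (1 / q) := by
          rw [aux_rpow_add (kk_ennreal_ne_zero n) (kk_ennreal_ne_top n), neg_add_cancel,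
            ENNReal.rpow_zero, one_mul]
  have hE1 : ∀ n, E n ≤ (kk n : ℝ≥0∞) ^ (-(1 / p)) * (((T n).card : ℝ≥0∞)) * A := by
    intro n
    rw [hEdef]
    simp only []
    rw [aux_block_eq p x n (T n) (hT n)]
    exact (mul_le_mul_right (aux_block_bound1 q x n (T n) (hT n)) _).trans (le_of_eq (by ring))
  set r1 := (2 : ℝ≥0∞) ^ (-(1 / q)) with hr1
  set r2 := (2 : ℝ≥0∞) ^ (-(1 / p)) with hr2
  have hmq : (2 : ℝ≥0∞) ^ ((L : ℝ) * (1 / q)) ≤ ((m : ℝ≥0∞)) ^ (1 / q) := by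
    rw [ENNReal.rpow_mul, ← aux_cast_two_pow L]
    exact ENNReal.rpow_le_rpow (by exact_mod_cast h2L) he.le
  have hcase1 : ∀ n, n ^ 2 + n ≤ L →
      E n ≤ (2 * r1 ^ (L - (n ^ 2 + n))) * (A * ((m : ℝ≥0∞)) ^ (1 / q)) := by
    intro n h1
    refine (hE2 n).trans ?_
    have hble : (((T n).card : ℝ≥0∞)) ^ (1 / q)
        ≤ ((2 : ℝ≥0∞)) ^ (((n ^ 2 + n : ℕ) : ℝ) * (1 / q)) := by
      rw [ENNReal.rpow_mul, ← aux_cast_two_pow]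
      refine ENNReal.rpow_le_rpow ?_ he.le
      exact_mod_cast (hcard_blen n).trans (le_of_eq (blen_eq n))
    have hb : (((T n).card : ℝ≥0∞)) ^ (1 / q)
        ≤ r1 ^ (L - (n ^ 2 + n)) * ((m : ℝ≥0∞)) ^ (1 / q) := by
      refine hble.trans ?_
      rw [aux_pow_div (1 / q) (n ^ 2 + n) L h1, hr1]
      exact mul_le_mul_right hmq _
    calc 2 * A * (((T n).card : ℝ≥0∞)) ^ (1 / q)
        ≤ 2 * A * (r1 ^ (L - (n ^ 2 + n)) * ((m : ℝ≥0∞)) ^ (1 / q)) := mul_le_mul_right hb _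
      _ = (2 * r1 ^ (L - (n ^ 2 + n))) * (A * ((m : ℝ≥0∞)) ^ (1 / q)) := by ring
  have hcase2 : ∀ n, E n ≤ 2 * (A * ((m : ℝ≥0∞)) ^ (1 / q)) := by
    intro n
    refine (hE2 n).trans ?_
    have hc : (((T n).card : ℝ≥0∞)) ^ (1 / q) ≤ ((m : ℝ≥0∞)) ^ (1 / q) :=
      ENNReal.rpow_le_rpow (by exact_mod_cast hcard_m n) he.le
    calc 2 * A * (((T n).card : ℝ≥0∞)) ^ (1 / q)
        ≤ 2 * A * ((m : ℝ≥0∞)) ^ (1 / q) := mul_le_mul_right hc _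
      _ = 2 * (A * ((m : ℝ≥0∞)) ^ (1 / q)) := by ring
  have hcase3 : ∀ n, L < n ^ 2 →
      E n ≤ (r2 ^ (n ^ 2 - (L + 1))) * (A * ((m : ℝ≥0∞)) ^ (1 / q)) := by
    intro n h3
    refine (hE1 n).trans ?_
    have hkkE : (kk n : ℝ≥0∞) ^ (-(1 / p)) = (2 : ℝ≥0∞) ^ (((n ^ 2 : ℕ) : ℝ) * (-(1 / p))) := by
      rw [ENNReal.rpow_mul, ← aux_cast_two_pow, kk]
    have hmsplit : ((m : ℝ≥0∞)) = ((m : ℝ≥0∞)) ^ (1 / p) * ((m : ℝ≥0∞)) ^ (1 / q) := by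
      rw [aux_rpow_add hmE0 hmEt, show 1 / p + 1 / q = 1 by linarith, ENNReal.rpow_one]
    have hmp : ((m : ℝ≥0∞)) ^ (1 / p) ≤ (2 : ℝ≥0∞) ^ ((((L + 1) : ℕ) : ℝ) * (1 / p)) := by
      rw [ENNReal.rpow_mul, ← aux_cast_two_pow]
      exact ENNReal.rpow_le_rpow (by exact_mod_cast hm2L.le) hp1.le
    have hfinal : (2 : ℝ≥0∞) ^ (((n ^ 2 : ℕ) : ℝ) * (-(1 / p)))
        * (2 : ℝ≥0∞) ^ ((((L + 1) : ℕ) : ℝ) * (1 / p)) = r2 ^ (n ^ 2 - (L + 1)) := by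
      rw [aux_pow_div (1 / p) (L + 1) (n ^ 2) h3, hr2, ← mul_assoc,
        mul_comm ((2:ℝ≥0∞) ^ (((n ^ 2 : ℕ) : ℝ) * (-(1 / p)))) _, mul_assoc,
        aux_rpow_add aux_two_ne_zero aux_two_ne_top,
        show ((n ^ 2 : ℕ) : ℝ) * (-(1 / p)) + ((n ^ 2 : ℕ) : ℝ) * (1 / p) = 0 by ring,
        ENNReal.rpow_zero, mul_one]
    calc (kk n : ℝ≥0∞) ^ (-(1 / p)) * (((T n).card : ℝ≥0∞)) * A
        ≤ (kk n : ℝ≥0∞) ^ (-(1 / p)) * ((m : ℝ≥0∞)) * A := by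
          gcongr
          exact_mod_cast hcard_m n
      _ = (kk n : ℝ≥0∞) ^ (-(1 / p)) * (((m : ℝ≥0∞)) ^ (1 / p) * ((m : ℝ≥0∞)) ^ (1 / q)) * A := by
          rw [← hmsplit]
      _ ≤ (kk n : ℝ≥0∞) ^ (-(1 / p)) *
            ((2 : ℝ≥0∞) ^ ((((L + 1) : ℕ) : ℝ) * (1 / p)) * ((m : ℝ≥0∞)) ^ (1 / q)) * A := by
          gcongr
      _ = ((2 : ℝ≥0∞) ^ (((n ^ 2 : ℕ) : ℝ) * (-(1 / p)))
            * (2 : ℝ≥0∞) ^ ((((L + 1) : ℕ) : ℝ) * (1 / p))) * (A * ((m : ℝ≥0∞)) ^ (1 / q)) := by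
          rw [hkkE]; ring
      _ = (r2 ^ (n ^ 2 - (L + 1))) * (A * ((m : ℝ≥0∞)) ^ (1 / q)) := by rw [hfinal]
  -- split the sum over n into three parts
  have hsplit1 := Finset.sum_filter_add_sum_filter_not (Finset.range N0)
    (fun n => n ^ 2 + n ≤ L) E
  have hsplit2 := Finset.sum_filter_add_sum_filter_not
    ((Finset.range N0).filter (fun n => ¬ n ^ 2 + n ≤ L)) (fun n => n ^ 2 ≤ L) E
  set s1 := (Finset.range N0).filter (fun n => n ^ 2 + n ≤ L) with hs1
  set s2 := ((Finset.range N0).filter (fun n => ¬ n ^ 2 + n ≤ L)).filter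
    (fun n => n ^ 2 ≤ L) with hs2
  set s3 := ((Finset.range N0).filter (fun n => ¬ n ^ 2 + n ≤ L)).filter
    (fun n => ¬ n ^ 2 ≤ L) with hs3
  have hbound1 : ∑ n ∈ s1, E n ≤ (2 * (1 - r1)⁻¹) * (A * ((m : ℝ≥0∞)) ^ (1 / q)) := by
    have hgeo : ∑ n ∈ s1, r1 ^ (L - (n ^ 2 + n)) ≤ (1 - r1)⁻¹ := by
      have hinj : ∀ n ∈ s1, ∀ n' ∈ s1, L - (n ^ 2 + n) = L - (n' ^ 2 + n') → n = n' := by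
        intro n hn n' hn' hd
        rw [hs1, Finset.mem_filter] at hn hn'
        exact aux_sq_add_inj (aux_sub_inj hn.2 hn'.2 hd)
      calc ∑ n ∈ s1, r1 ^ (L - (n ^ 2 + n))
          = ∑ d ∈ s1.image (fun n => L - (n ^ 2 + n)), r1 ^ d :=
            (Finset.sum_image (f := fun d => r1 ^ d) hinj).symm
        _ ≤ ∑' d : ℕ, r1 ^ d := ENNReal.sum_le_tsum _
        _ = (1 - r1)⁻¹ := ENNReal.tsum_geometric r1
    calc ∑ n ∈ s1, E n
        ≤ ∑ n ∈ s1, (2 * r1 ^ (L - (n ^ 2 + n))) * (A * ((m : ℝ≥0∞)) ^ (1 / q)) :=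
          Finset.sum_le_sum fun n hn => hcase1 n (by
            rw [hs1, Finset.mem_filter] at hn; exact hn.2)
      _ = (2 * ∑ n ∈ s1, r1 ^ (L - (n ^ 2 + n))) * (A * ((m : ℝ≥0∞)) ^ (1 / q)) := by
          rw [← Finset.sum_mul, ← Finset.mul_sum]
      _ ≤ (2 * (1 - r1)⁻¹) * (A * ((m : ℝ≥0∞)) ^ (1 / q)) := by
          gcongr
  have hbound2 : ∑ n ∈ s2, E n ≤ 2 * (A * ((m : ℝ≥0∞)) ^ (1 / q)) := by
    have hone : s2.card ≤ 1 := by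
      rw [Finset.card_le_one]
      intro a ha b hb
      rw [hs2, Finset.mem_filter, Finset.mem_filter] at ha hb
      exact aux_unique_mid ha.2 (not_le.mp ha.1.2) hb.2 (not_le.mp hb.1.2)
    calc ∑ n ∈ s2, E n
        ≤ ∑ n ∈ s2, 2 * (A * ((m : ℝ≥0∞)) ^ (1 / q)) :=
          Finset.sum_le_sum fun n _ => hcase2 n
      _ = (s2.card : ℝ≥0∞) * (2 * (A * ((m : ℝ≥0∞)) ^ (1 / q))) := by
          rw [Finset.sum_const, nsmul_eq_mul]
      _ ≤ 1 * (2 * (A * ((m : ℝ≥0∞)) ^ (1 / q))) := by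
          gcongr
          exact_mod_cast hone
      _ = 2 * (A * ((m : ℝ≥0∞)) ^ (1 / q)) := one_mul _
  have hbound3 : ∑ n ∈ s3, E n ≤ (1 - r2)⁻¹ * (A * ((m : ℝ≥0∞)) ^ (1 / q)) := by
    have hmem3 : ∀ n ∈ s3, L + 1 ≤ n ^ 2 := by
      intro n hn
      rw [hs3, Finset.mem_filter] at hn
      exact not_le.mp hn.2
    have hgeo : ∑ n ∈ s3, r2 ^ (n ^ 2 - (L + 1)) ≤ (1 - r2)⁻¹ := by
      have hinj : ∀ n ∈ s3, ∀ n' ∈ s3, n ^ 2 - (L + 1) = n' ^ 2 - (L + 1) → n = n' := by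
        intro n hn n' hn' hd
        exact aux_sq_inj (aux_sub_inj' (hmem3 n hn) (hmem3 n' hn') hd)
      calc ∑ n ∈ s3, r2 ^ (n ^ 2 - (L + 1))
          = ∑ d ∈ s3.image (fun n => n ^ 2 - (L + 1)), r2 ^ d :=
            (Finset.sum_image (f := fun d => r2 ^ d) hinj).symm
        _ ≤ ∑' d : ℕ, r2 ^ d := ENNReal.sum_le_tsum _
        _ = (1 - r2)⁻¹ := ENNReal.tsum_geometric r2
    calc ∑ n ∈ s3, E n
        ≤ ∑ n ∈ s3, (r2 ^ (n ^ 2 - (L + 1))) * (A * ((m : ℝ≥0∞)) ^ (1 / q)) :=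
          Finset.sum_le_sum fun n hn => hcase3 n (by
            have := hmem3 n hn; omega)
      _ = (∑ n ∈ s3, r2 ^ (n ^ 2 - (L + 1))) * (A * ((m : ℝ≥0∞)) ^ (1 / q)) := by
          rw [← Finset.sum_mul]
      _ ≤ (1 - r2)⁻¹ * (A * ((m : ℝ≥0∞)) ^ (1 / q)) := by gcongr
  calc ∑ n ∈ Finset.range N0, E n
      = ∑ n ∈ s1, E n + (∑ n ∈ s2, E n + ∑ n ∈ s3, E n) := by
        rw [hsplit2, hsplit1]
    _ ≤ (2 * (1 - r1)⁻¹) * (A * ((m : ℝ≥0∞)) ^ (1 / q))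
          + (2 * (A * ((m : ℝ≥0∞)) ^ (1 / q)) + (1 - r2)⁻¹ * (A * ((m : ℝ≥0∞)) ^ (1 / q))) :=
        add_le_add hbound1 (add_le_add hbound2 hbound3)
    _ = Kc p q * A * ((m : ℝ≥0∞)) ^ (1 / q) := by
        rw [Kc]; ring

end AuxSMain
section AuxP

lemma aux_P_block_le (p q : ℝ) (he : 0 < 1 / q) (hef : 1 / q + 1 / p = 1)
    (f : ℕ → ℝ) (n : ℕ) :
    wnorm q Measure.count (Pfun p f n) ≤ wnorm q Measure.count f := by
  classical
  refine aux_wnorm_le q _ _ (fun F => ?_)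
  rcases F.eq_empty_or_nonempty with rfl | hFne
  · simp
  have hterm : ∀ j : Fin (1 * 2 ^ n), ENNReal.ofReal |Pfun p f n j|
      ≤ (kk n : ℝ≥0∞) ^ (1 / p - 1) *
        ∑ r ∈ Finset.range (kk n), ENNReal.ofReal |f (loc n (j : ℕ) r)| := by
    intro j
    have h1 : |Pfun p f n j| = ((kk n : ℝ) ^ (1 / p - 1)) *
        |∑ r ∈ Finset.range (kk n), f (loc n (j : ℕ) r)| := by
      simp only [Pfun]
      rw [abs_mul, abs_of_nonneg (Real.rpow_nonneg (kk_cast_pos n).le _)]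
    rw [h1, ENNReal.ofReal_mul (Real.rpow_nonneg (kk_cast_pos n).le _), aux_ofReal_kk_rpow]
    refine mul_le_mul_right ?_ _
    calc ENNReal.ofReal |∑ r ∈ Finset.range (kk n), f (loc n (j : ℕ) r)|
        ≤ ENNReal.ofReal (∑ r ∈ Finset.range (kk n), |f (loc n (j : ℕ) r)|) :=
          ENNReal.ofReal_le_ofReal (Finset.abs_sum_le_sum_abs _ _)
      _ = ∑ r ∈ Finset.range (kk n), ENNReal.ofReal |f (loc n (j : ℕ) r)| :=
          ENNReal.ofReal_sum_of_nonneg (fun r _ => abs_nonneg _)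
  have hinj : ∀ z ∈ F ×ˢ Finset.range (kk n), ∀ z' ∈ F ×ˢ Finset.range (kk n),
      loc n (z.1 : ℕ) z.2 = loc n (z'.1 : ℕ) z'.2 → z = z' := by
    intro z hz z' hz' hl
    rw [Finset.mem_product, Finset.mem_range] at hz hz'
    have hj : (z.1 : ℕ) < 1 * 2 ^ n := z.1.isLt
    have hj' : (z'.1 : ℕ) < 1 * 2 ^ n := z'.1.isLt
    have e1 : (z.1 : ℕ) = (z'.1 : ℕ) := by
      rw [← jdx_loc hj hz.2, ← jdx_loc hj' hz'.2, hl]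
    have e2 : z.2 = z'.2 := by
      rw [← rdx_loc hj hz.2, ← rdx_loc hj' hz'.2, hl]
    exact Prod.ext (Fin.ext e1) e2
  have hdouble : ∑ j ∈ F, ∑ r ∈ Finset.range (kk n), ENNReal.ofReal |f (loc n (j : ℕ) r)|
      = ∑ i ∈ (F ×ˢ Finset.range (kk n)).image (fun z => loc n (z.1 : ℕ) z.2),
          ENNReal.ofReal |f i| := by
    rw [Finset.sum_image (f := fun i => ENNReal.ofReal |f i|) hinj, Finset.sum_product]
  have hcardim : ((F ×ˢ Finset.range (kk n)).image (fun z => loc n (z.1 : ℕ) z.2)).card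
      = F.card * kk n := by
    rw [Finset.card_image_of_injOn (fun z hz z' hz' hl =>
      hinj z (by simpa using hz) z' (by simpa using hz') hl), Finset.card_product,
      Finset.card_range]
  calc ∑ j ∈ F, ENNReal.ofReal |Pfun p f n j|
      ≤ ∑ j ∈ F, ((kk n : ℝ≥0∞) ^ (1 / p - 1) *
          ∑ r ∈ Finset.range (kk n), ENNReal.ofReal |f (loc n (j : ℕ) r)|) :=
        Finset.sum_le_sum fun j _ => hterm j
    _ = (kk n : ℝ≥0∞) ^ (1 / p - 1) *
          ∑ j ∈ F, ∑ r ∈ Finset.range (kk n), ENNReal.ofReal |f (loc n (j : ℕ) r)| := by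
        rw [Finset.mul_sum]
    _ = (kk n : ℝ≥0∞) ^ (1 / p - 1) *
          ∑ i ∈ (F ×ˢ Finset.range (kk n)).image (fun z => loc n (z.1 : ℕ) z.2),
            ENNReal.ofReal |f i| := by rw [hdouble]
    _ ≤ (kk n : ℝ≥0∞) ^ (1 / p - 1) *
          (wnorm q Measure.count f * (((F.card * kk n : ℕ) : ℝ≥0∞)) ^ (1 / q)) := by
        refine mul_le_mul_right ?_ _
        have := aux_finset_le_wnorm q f
          ((F ×ˢ Finset.range (kk n)).image (fun z => loc n (z.1 : ℕ) z.2))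
        rwa [hcardim] at this
    _ = wnorm q Measure.count f * ((F.card : ℝ≥0∞)) ^ (1 / q) := by
        rw [Nat.cast_mul, ENNReal.mul_rpow_of_nonneg _ _ he.le]
        rw [show (kk n : ℝ≥0∞) ^ (1 / p - 1) *
            (wnorm q Measure.count f * ((((F.card : ℕ) : ℝ≥0∞)) ^ (1 / q) *
              ((kk n : ℝ≥0∞)) ^ (1 / q))) =
            ((kk n : ℝ≥0∞) ^ (1 / p - 1) * ((kk n : ℝ≥0∞)) ^ (1 / q)) *
              (wnorm q Measure.count f * (((F.card : ℕ) : ℝ≥0∞)) ^ (1 / q)) from by ring]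
        rw [aux_rpow_add (kk_ennreal_ne_zero n) (kk_ennreal_ne_top n),
          show 1 / p - 1 + 1 / q = 0 by linarith, ENNReal.rpow_zero, one_mul]

lemma aux_Xnorm_P_le (p q : ℝ) (he : 0 < 1 / q) (hef : 1 / q + 1 / p = 1) (f : ℕ → ℝ) :
    Xnorm q 1 (Pfun p f) ≤ wnorm q Measure.count f := by
  unfold Xnorm
  exact iSup_le fun n => aux_P_block_le p q he hef f n

lemma aux_PS (p : ℝ) (x : XFull 1) : Pfun p (Sfun p x) = x := by
  funext n j
  have hj : (j : ℕ) < 1 * 2 ^ n := j.isLt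
  have hval : ∀ r ∈ Finset.range (kk n),
      Sfun p x (loc n (j : ℕ) r) = ((kk n : ℝ)) ^ (-(1 / p)) * x n j := by
    intro r hr
    rw [Finset.mem_range] at hr
    simp only [Sfun]
    rw [blk_loc hj hr, jdx_loc hj hr]
    congr 1
    unfold xfun
    rw [dif_pos hj]
  simp only [Pfun]
  rw [Finset.sum_congr rfl hval, Finset.sum_const, Finset.card_range, nsmul_eq_mul]
  have hkk : (0 : ℝ) < (kk n : ℝ) := kk_cast_pos n
  have hscal : ((kk n : ℝ)) ^ (1 / p - 1) * ((kk n : ℝ) * ((kk n : ℝ)) ^ (-(1 / p))) = 1 := by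
    calc ((kk n : ℝ)) ^ (1 / p - 1) * ((kk n : ℝ) * ((kk n : ℝ)) ^ (-(1 / p)))
        = ((kk n : ℝ)) ^ (1 / p - 1) * (((kk n : ℝ)) ^ (1 : ℝ) * ((kk n : ℝ)) ^ (-(1 / p))) := by
          rw [Real.rpow_one]
      _ = ((kk n : ℝ)) ^ ((1 / p - 1) + (1 + -(1 / p))) := by
          rw [Real.rpow_add hkk, Real.rpow_add hkk]
      _ = ((kk n : ℝ)) ^ (0 : ℝ) := by ring_nf
      _ = 1 := Real.rpow_zero _
  calc ((kk n : ℝ)) ^ (1 / p - 1) * ((kk n : ℕ) * (((kk n : ℝ)) ^ (-(1 / p)) * x n j))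
      = (((kk n : ℝ)) ^ (1 / p - 1) * ((kk n : ℝ) * ((kk n : ℝ)) ^ (-(1 / p)))) * x n j := by
        ring
    _ = x n j := by rw [hscal, one_mul]

lemma aux_Sfun_add (p : ℝ) (x y : XFull 1) : Sfun p (x + y) = Sfun p x + Sfun p y := by
  funext i
  simp only [Sfun, Pi.add_apply, xfun_add]
  ring

lemma aux_Sfun_smul (p : ℝ) (c : ℝ) (x : XFull 1) : Sfun p (c • x) = c • Sfun p x := by
  funext i
  simp only [Sfun, Pi.smul_apply, xfun_smul, smul_eq_mul]
  ring

lemma aux_Pfun_add (p : ℝ) (f g : ℕ → ℝ) : Pfun p (f + g) = Pfun p f + Pfun p g := by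
  funext n j
  simp only [Pfun, Pi.add_apply, Finset.sum_add_distrib]
  ring

lemma aux_Pfun_smul (p : ℝ) (c : ℝ) (f : ℕ → ℝ) : Pfun p (c • f) = c • Pfun p f := by
  funext n j
  simp only [Pfun, Pi.smul_apply, smul_eq_mul, ← Finset.mul_sum]
  ring

lemma aux_sigmafin (g : ℕ → ℝ) : SigmaFinSupp (Measure.count : Measure ℕ) g := by
  refine ⟨fun n => {n}, ?_, fun n => ?_⟩
  · intro i _
    exact Set.mem_iUnion.2 ⟨i, rfl⟩
  · rw [Measure.count_singleton]
    exact ENNReal.one_lt_top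

lemma aux_S_wnorm_le (p q : ℝ) (hp : 1 < p) (hq : q = p / (p - 1)) (x : XFull 1) :
    wnorm q Measure.count (Sfun p x) ≤ Kc p q * Xnorm q 1 x :=
  aux_wnorm_le q _ _ (fun s => by
    have := aux_S_sum_le p q hp hq x s
    calc ∑ i ∈ s, ENNReal.ofReal |Sfun p x i|
        ≤ Kc p q * Xnorm q 1 x * ((s.card : ℝ≥0∞)) ^ (1 / q) := this)

lemma aux_Smem (p q : ℝ) (hp : 1 < p) (hq : q = p / (p - 1)) (x : XFull 1)
    (hx : MemX q 1 x) : MemW q (Measure.count : Measure ℕ) (Sfun p x) := by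
  refine ⟨measurable_of_countable _, aux_sigmafin _, ?_⟩
  refine lt_of_le_of_lt (aux_S_wnorm_le p q hp hq x) ?_
  obtain ⟨hp1, he, he1, hef⟩ := aux_real_facts hp hq
  exact ENNReal.mul_lt_top (Kc_ne_top hp1 he).lt_top hx

lemma aux_Pmem (p q : ℝ) (hp : 1 < p) (hq : q = p / (p - 1)) (f : ℕ → ℝ)
    (hf : MemW q (Measure.count : Measure ℕ) f) : MemX q 1 (Pfun p f) := by
  obtain ⟨hp1, he, he1, hef⟩ := aux_real_facts hp hq
  exact lt_of_le_of_lt (aux_Xnorm_P_le p q he hef f) hf.2.2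

end AuxP
/-- Theorem 6 of the paper: `X_1 = (∑_{n≥0} ⊕ ℓ^{p,∞}(2^n))_{ℓ∞}` embeds complementably
into `ℓ^{p,∞}`. -/
theorem X1_embeds_complementably_in_weak_lp (p q : ℝ) (hp : 1 < p) (hq : q = p / (p - 1)) :
    ∃ (S : Xsub q 1 →ₗ[ℝ] WLp q (Measure.count : Measure ℕ))
      (P : WLp q (Measure.count : Measure ℕ) →ₗ[ℝ] Xsub q 1),
      (∃ C : ℝ, 0 < C ∧ ∀ x : Xsub q 1,
        wnorm q (Measure.count : Measure ℕ) ((S x : WLp q (Measure.count : Measure ℕ)) : ℕ → ℝ)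
          ≤ ENNReal.ofReal C * Xnorm q 1 (x : XFull 1)) ∧
      (∃ C : ℝ, 0 < C ∧ ∀ f : WLp q (Measure.count : Measure ℕ),
        Xnorm q 1 ((P f : Xsub q 1) : XFull 1)
          ≤ ENNReal.ofReal C * wnorm q (Measure.count : Measure ℕ) (f : ℕ → ℝ)) ∧
      (∀ x : Xsub q 1, P (S x) = x) := by
  obtain ⟨hp1, he, he1, hef⟩ := aux_real_facts hp hq
  refine ⟨{ toFun := fun x => ⟨Sfun p ↑x, aux_Smem p q hp hq ↑x x.2⟩,
            map_add' := fun x y => Subtype.ext (aux_Sfun_add p ↑x ↑y),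
            map_smul' := fun c x => Subtype.ext (aux_Sfun_smul p c ↑x) },
          { toFun := fun f => ⟨Pfun p ↑f, aux_Pmem p q hp hq ↑f f.2⟩,
            map_add' := fun f g => Subtype.ext (aux_Pfun_add p ↑f ↑g),
            map_smul' := fun c f => Subtype.ext (aux_Pfun_smul p c ↑f) },
          ⟨(Kc p q).toReal + 1, by positivity, fun x => ?_⟩,
          ⟨1, one_pos, fun f => ?_⟩, fun x => Subtype.ext (aux_PS p ↑x)⟩
  · refine (aux_S_wnorm_le p q hp hq ↑x).trans (mul_le_mul_left ?_ _)
    have hK := Kc_ne_top hp1 he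
    calc Kc p q = ENNReal.ofReal ((Kc p q).toReal) := (ENNReal.ofReal_toReal hK).symm
      _ ≤ ENNReal.ofReal ((Kc p q).toReal + 1) := ENNReal.ofReal_le_ofReal (by linarith)
  · rw [ENNReal.ofReal_one, one_mul]
    exact aux_Xnorm_P_le p q he hef ↑f
end
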